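/- Let G be a finite simple graph on [ℓ] with a perfect elimination ordering (v_1, ..., v_ℓ), and let q be a prime power. For every k ≥ 0, the number of tuples (w_1, ..., w_ℓ) ∈ (F_q^k)^ℓ such that for every clique {i_1,...,i_p} of G the vectors w_{i_1}, ..., w_{i_p} are linearly independent over F_q equals the product over i = 1, ..., ℓ of (q^k - q^{d_i}), where d_i = |N_{G_i}(v_i)| is the number of neighbors of v_i among v_1, ..., v_{i-1}. -/

import Mathlib

open Submodule

/-- Linear independence over "hereditarily closed" finsets. -/
lemma cliqueLI {F : Type*} [Field F] {n : ℕ} {V : Type*} [AddCommGroup V] [Module F V]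
    (N : Fin n → Finset (Fin n)) (w : Fin n → V)
    (hQ : ∀ i, w i ∉ Submodule.span F (w '' ↑(N i))) :
    ∀ S : Finset (Fin n), (∀ j j', j ∈ S → j' ∈ S → j < j' → j ∈ N j') →
      LinearIndependent F (fun x : (S : Set (Fin n)) => w x) := by
  intro S
  induction S using Finset.strongInduction with
  | _ S ih =>
    intro hS
    rcases S.eq_empty_or_nonempty with rfl | hne
    · simpa using linearIndependent_empty_type
    · have hmem := S.max'_mem hne
      set m := S.max' hne with hm
      have hins : (S : Set (Fin n)) = insert m ↑(S.erase m) := by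
        rw [← Finset.coe_insert, Finset.insert_erase hmem]
      rw [hins]; show LinearIndepOn F w (insert m ↑(S.erase m)); rw [linearIndepOn_insert (by simp)]
      refine ⟨ih (S.erase m) (Finset.erase_ssubset hmem)
        (fun j j' hj hj' => hS j j' (Finset.mem_of_mem_erase hj) (Finset.mem_of_mem_erase hj')), ?_⟩
      intro hsp
      refine hQ m (Submodule.span_mono (Set.image_mono (f := w) ?_) hsp)
      intro x hx
      simp only [Finset.coe_erase, Set.mem_diff, Finset.mem_coe] at hx
      have hxm : x < m := lt_of_le_of_ne (S.le_max' x hx.1) (by simpa using hx.2)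
      exact hS x m hx.1 hmem hxm

/-- Counting vectors outside the span of a linearly independent finset-indexed family. -/
lemma count_compl {F : Type*} [Field F] [Fintype F] (k : ℕ) {n : ℕ}
    (a : Fin n → (Fin k → F)) (L : Finset (Fin n))
    (hLI : LinearIndependent F (fun x : (L : Set (Fin n)) => a x)) :
    L.card ≤ k ∧
    Nat.card {x : Fin k → F // x ∉ Submodule.span F (a '' ↑L)}
      = Fintype.card F ^ k - Fintype.card F ^ L.card := by
  classical
  set U : Submodule F (Fin k → F) := Submodule.span F (a '' ↑L) with hU
  have hinj : Set.InjOn a ↑L := by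
    intro x hx y hy hxy
    have := hLI.injective (a₁ := ⟨x, hx⟩) (a₂ := ⟨y, hy⟩) hxy
    exact Subtype.ext_iff.mp this
  have himg : a '' ↑L = ↑(L.image a) := by rw [Finset.coe_image]
  have hLI2 : LinearIndependent F ((↑) : (↑(L.image a) : Set (Fin k → F)) → (Fin k → F)) := by
    have := LinearIndepOn.id_image (v := a) (s := (L : Set (Fin n))) hLI
    rw [himg] at this
    exact this
  have hfr : Module.finrank F U = L.card := by
    rw [hU, himg, finrank_span_finset_eq_card hLI2, Finset.card_image_of_injOn hinj]
  have hdk : L.card ≤ k := by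
    have h1 := U.finrank_le
    rw [hfr, Module.finrank_fin_fun (R := F)] at h1
    exact h1
  refine ⟨hdk, ?_⟩
  have hcardU : Fintype.card {x : Fin k → F // x ∈ U} = Fintype.card F ^ L.card := by
    letI : Fintype U := Fintype.ofFinite U
    rw [← hfr]
    convert Module.card_eq_pow_finrank (K := F) (V := U) using 2
  have hcardV : Fintype.card (Fin k → F) = Fintype.card F ^ k := by simp
  rw [Nat.card_eq_fintype_card, Fintype.card_subtype_compl, hcardV, hcardU]

lemma restrict_eq {n : ℕ} (M : Finset (Fin (n+1))) (hM : ∀ j ∈ M, j ≠ Fin.last n) :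
    M = (Finset.univ.filter (fun j : Fin n => j.castSucc ∈ M)).image Fin.castSucc := by
  ext j
  simp only [Finset.mem_image, Finset.mem_filter, Finset.mem_univ, true_and]
  constructor
  · intro hj
    obtain ⟨y, hy⟩ := Fin.exists_castSucc_eq.mpr (hM j hj)
    exact ⟨y, hy ▸ hj, hy⟩
  · rintro ⟨y, hy, rfl⟩; exact hy

lemma key {F : Type*} [Field F] [Fintype F] (k : ℕ) :
    ∀ (n : ℕ) (N : Fin n → Finset (Fin n)),
      (∀ i j, j ∈ N i → j < i) →
      (∀ i j j', j ∈ N i → j' ∈ N i → j < j' → j ∈ N j') →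
      (Nat.card {w : Fin n → (Fin k → F) //
          ∀ i, w i ∉ Submodule.span F (w '' ↑(N i))} : ℤ)
        = ∏ i : Fin n,
            ((Fintype.card F : ℤ) ^ k - (Fintype.card F : ℤ) ^ (N i).card) := by
  intro n
  induction n with
  | zero =>
    intro N _ _
    haveI : Unique {w : Fin 0 → (Fin k → F) // ∀ i, w i ∉ span F (w '' ↑(N i))} :=
      ⟨⟨⟨fun i => i.elim0, fun i => i.elim0⟩⟩, fun a => Subtype.ext (funext fun i => i.elim0)⟩
    simp [Nat.card_unique]
  | succ n IH =>
    intro N hlt hcl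
    classical
    set c := Fintype.card F with hc
    set N' : Fin n → Finset (Fin n) :=
      fun i => Finset.univ.filter (fun j => j.castSucc ∈ N i.castSucc) with hN'
    set L : Finset (Fin n) :=
      Finset.univ.filter (fun j => j.castSucc ∈ N (Fin.last n)) with hL
    have hMC : ∀ i : Fin n, N i.castSucc = (N' i).image Fin.castSucc := fun i =>
      restrict_eq _ (fun j hj => Fin.ne_last_of_lt ((hlt _ _ hj).trans (Fin.castSucc_lt_last i)))
    have hML : N (Fin.last n) = L.image Fin.castSucc :=
      restrict_eq _ (fun j hj => Fin.ne_last_of_lt (hlt _ _ hj))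
    have himg : ∀ (w : Fin (n+1) → (Fin k → F)) (M' : Finset (Fin n)),
        w '' ↑(M'.image Fin.castSucc) = (fun j : Fin n => w j.castSucc) '' ↑M' := by
      intro w M'; rw [Finset.coe_image, Set.image_image]
    have hQiff : ∀ w : Fin (n+1) → (Fin k → F),
        (∀ i, w i ∉ span F (w '' ↑(N i))) ↔
          ((∀ i, (fun j : Fin n => w j.castSucc) i ∉
              span F ((fun j : Fin n => w j.castSucc) '' ↑(N' i))) ∧
            w (Fin.last n) ∉ span F ((fun j : Fin n => w j.castSucc) '' ↑L)) := by
      intro w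
      constructor
      · intro h
        refine ⟨fun i => ?_, ?_⟩
        · have := h i.castSucc; rwa [hMC i, himg] at this
        · have := h (Fin.last n); rwa [hML, himg] at this
      · rintro ⟨h1, h2⟩ i
        refine Fin.lastCases ?_ (fun i => ?_) i
        · rwa [hML, himg]
        · rw [hMC i, himg]; exact h1 i
    -- clique structure of N'
    have hlt' : ∀ i j, j ∈ N' i → j < i := by
      intro i j hj
      rw [hN'] at hj
      simp only [Finset.mem_filter, Finset.mem_univ, true_and] at hj
      exact Fin.castSucc_lt_castSucc_iff.mp (hlt _ _ hj)
    have hcl' : ∀ i j j', j ∈ N' i → j' ∈ N' i → j < j' → j ∈ N' j' := by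
      intro i j j' hj hj' hlt2
      simp only [hN', Finset.mem_filter, Finset.mem_univ, true_and] at hj hj' ⊢
      exact hcl _ _ _ hj hj' (Fin.castSucc_lt_castSucc_iff.mpr hlt2)
    have hLclique : ∀ j j', j ∈ L → j' ∈ L → j < j' → j ∈ N' j' := by
      intro j j' hj hj' hlt2
      simp only [hL, Finset.mem_filter, Finset.mem_univ, true_and] at hj hj'
      simp only [hN', Finset.mem_filter, Finset.mem_univ, true_and]
      exact hcl _ _ _ hj hj' (Fin.castSucc_lt_castSucc_iff.mpr hlt2)
    -- the equivalence
    let ePi : (Fin (n+1) → (Fin k → F)) ≃ (Fin n → (Fin k → F)) × (Fin k → F) :=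
      { toFun := fun w => (fun j => w j.castSucc, w (Fin.last n))
        invFun := fun p => Fin.snoc p.1 p.2
        left_inv := fun w => funext fun i =>
          Fin.lastCases (Fin.snoc_last _ _) (fun i => Fin.snoc_castSucc _ _ _) i
        right_inv := fun p => by
          refine Prod.ext (funext fun i => ?_) ?_ <;> simp }
    have hcardA : Nat.card {w : Fin (n+1) → (Fin k → F) //
          ∀ i, w i ∉ span F (w '' ↑(N i))}
        = Nat.card {p : (Fin n → (Fin k → F)) × (Fin k → F) //
            (∀ i, p.1 i ∉ span F (p.1 '' ↑(N' i))) ∧ p.2 ∉ span F (p.1 '' ↑L)} := by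
      refine Nat.card_congr (Equiv.subtypeEquiv ePi (fun w => ?_))
      exact hQiff w
    -- sigma decomposition
    have hcardB : Nat.card {p : (Fin n → (Fin k → F)) × (Fin k → F) //
            (∀ i, p.1 i ∉ span F (p.1 '' ↑(N' i))) ∧ p.2 ∉ span F (p.1 '' ↑L)}
        = ∑ a : Fin n → (Fin k → F),
            Nat.card {b : Fin k → F //
              (∀ i, a i ∉ span F (a '' ↑(N' i))) ∧ b ∉ span F (a '' ↑L)} := by
      rw [Nat.card_congr (Equiv.subtypeProdEquivSigmaSubtype
        (fun (a : Fin n → (Fin k → F)) (b : Fin k → F) =>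
          (∀ i, a i ∉ span F (a '' ↑(N' i))) ∧ b ∉ span F (a '' ↑L)))]
      rw [Nat.card_eq_fintype_card, Fintype.card_sigma]
      exact Finset.sum_congr rfl (fun a _ => (Nat.card_eq_fintype_card).symm)
    have hfib : ∀ a : Fin n → (Fin k → F),
        Nat.card {b : Fin k → F //
            (∀ i, a i ∉ span F (a '' ↑(N' i))) ∧ b ∉ span F (a '' ↑L)}
          = if (∀ i, a i ∉ span F (a '' ↑(N' i))) then (c ^ k - c ^ L.card) else 0 := by
      intro a
      by_cases hQ' : ∀ i, a i ∉ span F (a '' ↑(N' i))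
      · rw [if_pos hQ']
        have e2 : {b : Fin k → F //
              (∀ i, a i ∉ span F (a '' ↑(N' i))) ∧ b ∉ span F (a '' ↑L)}
            ≃ {b : Fin k → F // b ∉ span F (a '' ↑L)} :=
          Equiv.subtypeEquiv (Equiv.refl _) (fun b => by simp [hQ'])
        rw [Nat.card_congr e2]
        exact (count_compl k a L (cliqueLI N' a hQ' L hLclique)).2
      · rw [if_neg hQ']
        haveI : IsEmpty {b : Fin k → F //
            (∀ i, a i ∉ span F (a '' ↑(N' i))) ∧ b ∉ span F (a '' ↑L)} :=
          ⟨fun b => hQ' b.2.1⟩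
        exact Nat.card_of_isEmpty
    have hsum : (∑ a : Fin n → (Fin k → F),
          Nat.card {b : Fin k → F //
            (∀ i, a i ∉ span F (a '' ↑(N' i))) ∧ b ∉ span F (a '' ↑L)})
        = Nat.card {a : Fin n → (Fin k → F) //
            ∀ i, a i ∉ span F (a '' ↑(N' i))} * (c ^ k - c ^ L.card) := by
      rw [Finset.sum_congr rfl (fun a _ => hfib a), ← Finset.sum_filter,
        Finset.sum_const, smul_eq_mul, Nat.card_eq_fintype_card, Fintype.card_subtype]
    have hcards : ∀ i : Fin n, (N i.castSucc).card = (N' i).card := fun i => by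
      rw [hMC i, Finset.card_image_of_injective _ (Fin.castSucc_injective n)]
    have hcardL : (N (Fin.last n)).card = L.card := by
      rw [hML, Finset.card_image_of_injective _ (Fin.castSucc_injective n)]
    have hIH := IH N' hlt' hcl'
    have hprod : ∏ i : Fin n, ((c:ℤ)^k - (c:ℤ)^(N i.castSucc).card)
        = ∏ i : Fin n, ((c:ℤ)^k - (c:ℤ)^(N' i).card) :=
      Finset.prod_congr rfl (fun i _ => by rw [hcards i])
    rw [Fin.prod_univ_castSucc, hcardA, hcardB, hsum, hcardL, hprod, ← hIH]
    by_cases hX : Nat.card {a : Fin n → (Fin k → F) //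
        ∀ i, a i ∉ span F (a '' ↑(N' i))} = 0
    · rw [hX]; simp
    · have hne : Nonempty {a : Fin n → (Fin k → F) //
          ∀ i, a i ∉ span F (a '' ↑(N' i))} := (Nat.card_ne_zero.mp hX).1
      obtain ⟨a⟩ := hne
      have hdk := (count_compl k a.1 L (cliqueLI N' a.1 a.2 L hLclique)).1
      have hle : c ^ L.card ≤ c ^ k := Nat.pow_le_pow_right Fintype.card_pos hdk
      rw [Nat.cast_mul, Nat.cast_sub hle]
      push_cast
      ring

/-- An ordering `σ 0, σ 1, …` of the vertices is a perfect elimination ordering if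
for each `i`, the earlier neighbors of `σ i` form a clique. -/
def IsPerfectEliminationOrdering {ℓ : ℕ} (G : SimpleGraph (Fin ℓ))
    (σ : Equiv.Perm (Fin ℓ)) : Prop :=
  ∀ i : Fin ℓ, G.IsClique {u | ∃ j : Fin ℓ, j < i ∧ u = σ j ∧ G.Adj (σ j) (σ i)}

/-- For a graph `G` on `[ℓ]` with a perfect elimination ordering, the number of
tuples in `(F_q^k)^ℓ` whose vectors along every clique are linearly independent
equals `∏ᵢ (q^k - q^{dᵢ})`, where `dᵢ` is the number of earlier neighbors of the
`i`-th vertex. -/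
theorem qGraphical_count_chordal {F : Type*} [Field F] [Fintype F] [DecidableEq F]
    (q : ℕ) (hq : q = Fintype.card F) {ℓ : ℕ} (G : SimpleGraph (Fin ℓ))
    [DecidableRel G.Adj] (σ : Equiv.Perm (Fin ℓ))
    (hσ : IsPerfectEliminationOrdering G σ) (k : ℕ) :
    (Nat.card {v : Fin ℓ → (Fin k → F) //
        ∀ s : Finset (Fin ℓ), G.IsClique ↑s → LinearIndependent F (fun i : s => v i)}
      : ℤ) =
      ∏ i : Fin ℓ,
        ((q : ℤ) ^ k -
          (q : ℤ) ^ (Finset.univ.filter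
            (fun j : Fin ℓ => j < i ∧ G.Adj (σ j) (σ i))).card) := by
  classical
  subst hq
  set N : Fin ℓ → Finset (Fin ℓ) :=
    fun i => Finset.univ.filter (fun j : Fin ℓ => j < i ∧ G.Adj (σ j) (σ i)) with hN
  have hNmem : ∀ i j, j ∈ N i ↔ (j < i ∧ G.Adj (σ j) (σ i)) := by
    intro i j; simp [hN]
  have hlt : ∀ i j, j ∈ N i → j < i := fun i j hj => ((hNmem i j).mp hj).1
  have hcl : ∀ i j j', j ∈ N i → j' ∈ N i → j < j' → j ∈ N j' := by
    intro i j j' hj hj' hjj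
    rw [hNmem] at hj hj' ⊢
    refine ⟨hjj, ?_⟩
    have hj2 : σ j ∈ {u | ∃ j2 : Fin ℓ, j2 < i ∧ u = σ j2 ∧ G.Adj (σ j2) (σ i)} :=
      ⟨j, hj.1, rfl, hj.2⟩
    have hj'2 : σ j' ∈ {u | ∃ j2 : Fin ℓ, j2 < i ∧ u = σ j2 ∧ G.Adj (σ j2) (σ i)} :=
      ⟨j', hj'.1, rfl, hj'.2⟩
    exact hσ i hj2 hj'2 (fun h => absurd (σ.injective h) (ne_of_lt hjj))
  -- the equivalence between the two counting problems
  have hiff : ∀ v : Fin ℓ → (Fin k → F),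
      (∀ s : Finset (Fin ℓ), G.IsClique ↑s → LinearIndependent F (fun i : s => v i)) ↔
        (∀ i, (v ∘ σ) i ∉ span F ((v ∘ σ) '' ↑(N i))) := by
    intro v
    constructor
    · intro h i
      have hsub : σ '' ↑(N i) ⊆ {u | ∃ j : Fin ℓ, j < i ∧ u = σ j ∧ G.Adj (σ j) (σ i)} := by
        rintro x ⟨j, hj, rfl⟩
        rw [Finset.mem_coe, hNmem] at hj
        exact ⟨j, hj.1, rfl, hj.2⟩
      have hclique : G.IsClique (insert (σ i) (σ '' ↑(N i))) := by
        refine SimpleGraph.IsClique.insert ((hσ i).subset hsub) ?_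
        rintro b ⟨j, hj, rfl⟩ _
        rw [Finset.mem_coe, hNmem] at hj
        exact hj.2.symm
      have hseteq : ((insert (σ i) ((N i).image σ) : Finset (Fin ℓ)) : Set (Fin ℓ))
          = insert (σ i) (σ '' ↑(N i)) := by
        simp
      have hLI := h (insert (σ i) ((N i).image σ)) (by rw [hseteq]; exact hclique)
      have hLI' : LinearIndependent F
          (fun x : (insert (σ i) (σ '' ↑(N i)) : Set (Fin ℓ)) => v x) := by
        rw [← hseteq]; exact hLI
      have hnm : σ i ∉ σ '' ↑(N i) := by
        rintro ⟨j, hj, hje⟩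
        rw [Finset.mem_coe, hNmem] at hj
        exact absurd (σ.injective hje) (ne_of_lt hj.1)
      have := ((linearIndepOn_insert (f := v) hnm).mp hLI').2
      rwa [Set.image_image] at this
    · intro h s hs
      have hSprop : ∀ j j', j ∈ s.image σ.symm → j' ∈ s.image σ.symm → j < j' → j ∈ N j' := by
        intro j j' hj hj' hjj
        simp only [Finset.mem_image] at hj hj'
        obtain ⟨x, hx, rfl⟩ := hj
        obtain ⟨x', hx', rfl⟩ := hj'
        rw [hNmem]
        refine ⟨hjj, ?_⟩
        have hadj : G.Adj x x' := hs hx hx' (by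
          intro hxeq
          exact absurd (congrArg σ.symm hxeq) (ne_of_lt hjj))
        simpa using hadj
      have hLI := cliqueLI N (v ∘ σ) h (s.image σ.symm) hSprop
      let e : ((s.image σ.symm : Finset (Fin ℓ)) : Set (Fin ℓ)) ≃ {x // x ∈ s} :=
        { toFun := fun j => ⟨σ j.1, by
            have := j.2
            simp only [Finset.coe_image, Set.mem_image, Finset.mem_coe] at this
            obtain ⟨x, hx, hxe⟩ := this
            rw [← hxe]; simpa using hx⟩
          invFun := fun x => ⟨σ.symm x.1, by
            simp only [Finset.coe_image, Set.mem_image, Finset.mem_coe]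
            exact ⟨x.1, x.2, rfl⟩⟩
          left_inv := fun j => Subtype.ext (by simp)
          right_inv := fun x => Subtype.ext (by simp) }
      have h2 := hLI.comp e.symm e.symm.injective
      have h3 : (fun x : {x // x ∈ s} => v x)
          = (fun j : ((s.image σ.symm : Finset (Fin ℓ)) : Set (Fin ℓ)) => (v ∘ σ) j) ∘ e.symm := by
        funext x
        simp [e]
      rw [h3]
      exact h2
  have hcard : Nat.card {v : Fin ℓ → (Fin k → F) //
        ∀ s : Finset (Fin ℓ), G.IsClique ↑s → LinearIndependent F (fun i : s => v i)}
      = Nat.card {w : Fin ℓ → (Fin k → F) //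
        ∀ i, w i ∉ span F (w '' ↑(N i))} := by
    refine Nat.card_congr (Equiv.subtypeEquiv
      (Equiv.arrowCongr (σ.symm : Fin ℓ ≃ Fin ℓ) (Equiv.refl (Fin k → F))) (fun v => ?_))
    rw [hiff v]
    constructor
    · intro h i
      have := h i
      convert this using 2 <;> rfl
    · intro h i
      have := h i
      convert this using 2 <;> rfl
  rw [hcard]
  exact key k ℓ N hlt hcl
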